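/- Let σ : ℝ → ℝ be locally integrable and not almost everywhere equal to an affine function, and let (x_i, z_i), i = 1,…,d, be a data set with x_i ∈ ℝ^p pairwise distinct and z_i ∈ ℝ^q. Then there exists a feedforward neural network g : ℝ^p → ℝ^q with activation σ such that g(x_i) = z_i for all i = 1,…,d. -/

import Mathlib

open MeasureTheory Polynomial

/-- `DeepNet σ p q f` says `f : ℝ^p → ℝ^q` is a feedforward neural network with activation `σ`:
`f(x) = W_l σ(W_{l-1} σ(⋯ σ(W_1 x − b_1) ⋯) − b_{l-1}) − b_l` for some depth `l ≥ 1`,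
layer widths, weight matrices and biases, with `σ` applied componentwise. -/
inductive DeepNet (σ : ℝ → ℝ) (p : ℕ) : (q : ℕ) → ((Fin p → ℝ) → (Fin q → ℝ)) → Prop
  | affine {q : ℕ} (W : Matrix (Fin q) (Fin p) ℝ) (b : Fin q → ℝ) :
      DeepNet σ p q (fun x => W.mulVec x - b)
  | layer {m q : ℕ} {g : (Fin p → ℝ) → (Fin m → ℝ)} (hg : DeepNet σ p m g)
      (W : Matrix (Fin q) (Fin m) ℝ) (b : Fin q → ℝ) :
      DeepNet σ p q (fun x => W.mulVec (fun j => σ (g x j)) - b)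

namespace DIVO

/-- Depth-indexed networks with arbitrary finite index types for layers. -/
inductive Net (σ : ℝ → ℝ) (p : ℕ) : ℕ → (κ : Type) → ((Fin p → ℝ) → (κ → ℝ)) → Prop
  | affine {κ : Type} (W : Matrix κ (Fin p) ℝ) (b : κ → ℝ) :
      Net σ p 0 κ (fun x => W.mulVec x - b)
  | layer {ℓ : ℕ} {κ' : Type} [Fintype κ'] {κ : Type}
      {g : (Fin p → ℝ) → (κ' → ℝ)} (hg : Net σ p ℓ κ' g)
      (W : Matrix κ κ' ℝ) (b : κ → ℝ) :
      Net σ p (ℓ+1) κ (fun x => W.mulVec (fun j => σ (g x j)) - b)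

variable {σ : ℝ → ℝ} {p : ℕ}

lemma net_zero_inv {κ g} (h : Net σ p 0 κ g) :
    ∃ (W : Matrix κ (Fin p) ℝ) (b : κ → ℝ),
      g = fun x => W.mulVec x - b := by
  cases h with
  | affine W b => exact ⟨W, b, rfl⟩

lemma net_succ_inv {ℓ κ g} (h : Net σ p (ℓ+1) κ g) :
    ∃ (κ' : Type) (_ : Fintype κ') (g' : (Fin p → ℝ) → (κ' → ℝ))
      (W : Matrix κ κ' ℝ) (b : κ → ℝ),
      Net σ p ℓ κ' g' ∧ g = fun x => W.mulVec (fun j => σ (g' x j)) - b := by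
  cases h with
  | layer hg W b => exact ⟨_, ‹_›, _, W, b, hg, rfl⟩

/-- Postcompose a network with an affine map (possibly changing the output index type). -/
lemma Net.affineComp {ℓ κ g} (h : Net σ p ℓ κ g) [Fintype κ] {κ₂ : Type} [Fintype κ₂]
    (A : Matrix κ₂ κ ℝ) (c : κ₂ → ℝ) :
    Net σ p ℓ κ₂ (fun x => A.mulVec (g x) - c) := by
  cases h with
  | affine W b =>
      have e : (fun x => A.mulVec ((fun x => W.mulVec x - b) x) - c)
          = fun x => (A * W).mulVec x - (A.mulVec b + c) := by
        funext x
        rw [Matrix.mulVec_sub, Matrix.mulVec_mulVec]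
        abel
      rw [e]
      exact Net.affine _ _
  | layer hg W b =>
      rename_i g'
      have e : (fun x => A.mulVec ((fun x => W.mulVec (fun j => σ (g' x j)) - b) x) - c)
          = fun x => (A * W).mulVec (fun j => σ (g' x j)) - (A.mulVec b + c) := by
        funext x
        simp only [Matrix.mulVec_sub, Matrix.mulVec_mulVec]
        abel
      rw [e]
      exact Net.layer hg _ _

/-- Sum.elim distributes over the pieces. -/
lemma sum_elim_mulVec {κ₁ κ₂ : Type} (W₁ : Matrix κ₁ (Fin p) ℝ) (W₂ : Matrix κ₂ (Fin p) ℝ)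
    (x : Fin p → ℝ) :
    (Matrix.of (Sum.elim W₁ W₂)).mulVec x = Sum.elim (W₁.mulVec x) (W₂.mulVec x) := by
  funext j; cases j <;> rfl

lemma sum_elim_sub {κ₁ κ₂ : Type} (u₁ a₁ : κ₁ → ℝ) (u₂ a₂ : κ₂ → ℝ) :
    Sum.elim u₁ u₂ - Sum.elim a₁ a₂ = Sum.elim (u₁ - a₁) (u₂ - a₂) := by
  funext j; cases j <;> rfl

/-- Concatenation of two same-depth networks. -/
lemma Net.concat {ℓ} : ∀ {κ₁ κ₂ : Type} {g₁ g₂},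
    Net σ p ℓ κ₁ g₁ → Net σ p ℓ κ₂ g₂ →
    Net σ p ℓ (κ₁ ⊕ κ₂) (fun x => Sum.elim (g₁ x) (g₂ x)) := by
  induction ℓ with
  | zero =>
      intro κ₁ κ₂ g₁ g₂ h₁ h₂
      obtain ⟨W₁, b₁, rfl⟩ := net_zero_inv h₁
      obtain ⟨W₂, b₂, rfl⟩ := net_zero_inv h₂
      have e : (fun x => Sum.elim (W₁.mulVec x - b₁) (W₂.mulVec x - b₂))
          = fun x => (Matrix.of (Sum.elim W₁ W₂)).mulVec x - Sum.elim b₁ b₂ := by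
        funext x
        rw [sum_elim_mulVec, sum_elim_sub]
      rw [e]
      exact Net.affine _ _
  | succ ℓ ih =>
      intro κ₁ κ₂ g₁ g₂ h₁ h₂
      obtain ⟨κ₁', i₁, g₁', W₁, b₁, hn₁, rfl⟩ := net_succ_inv h₁
      obtain ⟨κ₂', i₂, g₂', W₂, b₂, hn₂, rfl⟩ := net_succ_inv h₂
      have hin := ih hn₁ hn₂
      have e : (fun x => Sum.elim (W₁.mulVec (fun j => σ (g₁' x j)) - b₁)
            (W₂.mulVec (fun j => σ (g₂' x j)) - b₂))
          = fun x => (Matrix.fromBlocks W₁ 0 0 W₂).mulVec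
              (fun j => σ (Sum.elim (g₁' x) (g₂' x) j)) - Sum.elim b₁ b₂ := by
        funext x
        have : (fun j => σ (Sum.elim (g₁' x) (g₂' x) j))
            = Sum.elim (fun j => σ (g₁' x j)) (fun j => σ (g₂' x j)) := by
          funext j; cases j <;> rfl
        rw [this, Matrix.fromBlocks_mulVec, sum_elim_sub]
        congr 1 <;> simp [Matrix.zero_mulVec]
      rw [e]
      exact Net.layer hin _ _

/-- A trivial network of any depth with `Empty` output. -/
lemma net_empty (σ : ℝ → ℝ) (p : ℕ) : ∀ ℓ, ∃ g, Net σ p ℓ Empty g := by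
  intro ℓ
  induction ℓ with
  | zero => exact ⟨_, Net.affine (κ := Empty) 0 0⟩
  | succ ℓ ih =>
      obtain ⟨g, hg⟩ := ih
      exact ⟨_, Net.layer hg 0 0⟩

/-- Assemble a finite family of `Unit`-output networks of equal depth into one network. -/
lemma famNet {ℓ} : ∀ (J : ℕ) (u : Fin J → ((Fin p → ℝ) → (Unit → ℝ))),
    (∀ j, Net σ p ℓ Unit (u j)) →
    ∃ (κ : Type) (_ : Fintype κ) (G : (Fin p → ℝ) → (κ → ℝ)) (e : Fin J → κ),
      Net σ p ℓ κ G ∧ ∀ (x : Fin p → ℝ) (j : Fin J), G x (e j) = u j x () := by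
  intro J
  induction J with
  | zero =>
      intro u hu
      obtain ⟨g, hg⟩ := net_empty σ p ℓ
      exact ⟨Empty, inferInstance, g, Fin.elim0, hg, fun x j => j.elim0⟩
  | succ J ih =>
      intro u hu
      obtain ⟨κ, iκ, G, e, hG, hval⟩ := ih (fun j => u j.castSucc) (fun j => hu j.castSucc)
      refine ⟨κ ⊕ Unit, inferInstance, _, fun j => Fin.lastCases (Sum.inr ()) (fun k => Sum.inl (e k)) j,
        hG.concat (hu (Fin.last J)), ?_⟩
      intro x j
      refine Fin.lastCases ?_ ?_ j
      · simp
      · intro k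
        simp [hval]

/-- Convert a depth-indexed net (with reindexing) to a `DeepNet`. -/
lemma net_reindex_deep : ∀ {ℓ : ℕ} {κ : Type} {g}, Net σ p ℓ κ g →
    ∀ (q : ℕ) (e : Fin q ≃ κ), DeepNet σ p q (fun x j => g x (e j)) := by
  intro ℓ
  induction ℓ with
  | zero =>
      intro κ g h q e
      obtain ⟨W, b, rfl⟩ := net_zero_inv h
      have eq : (fun x (j : Fin q) => ((fun x => W.mulVec x - b) x) (e j))
          = fun x => (Matrix.of fun j k => W (e j) k).mulVec x - fun j => b (e j) := by
        funext x j; rfl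
      rw [eq]
      exact DeepNet.affine _ _
  | succ ℓ ih =>
      intro κ g h q e
      obtain ⟨κ', i', g', W, b, hn, rfl⟩ := net_succ_inv h
      have e' : Fin (Fintype.card κ') ≃ κ' := (Fintype.equivFin κ').symm
      have hin : DeepNet σ p (Fintype.card κ') (fun x k => g' x (e' k)) := ih hn _ e'
      have eq : (fun x (j : Fin q) => ((fun x => W.mulVec (fun j' => σ (g' x j')) - b) x) (e j))
          = fun x => (Matrix.of fun j k => W (e j) (e' k)).mulVec
              (fun k => σ ((fun x k => g' x (e' k)) x k)) - fun j => b (e j) := by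
        funext x j
        simp only [Pi.sub_apply, Matrix.mulVec, dotProduct, Matrix.of_apply]
        congr 1
        exact (Equiv.sum_comp e' (fun j' => W (e j) j' * σ (g' x j'))).symm
      rw [eq]
      exact DeepNet.layer hin _ _

lemma net_toDeep {ℓ q g} (h : Net σ p ℓ (Fin q) g) : DeepNet σ p q g := by
  have := net_reindex_deep h q (Equiv.refl _)
  simpa using this

section Feat

variable (σ p) {d : ℕ} (x : Fin d → Fin p → ℝ)

/-- Value vectors at the data points achievable by scalar networks of depth `ℓ`. -/
def FeatV (ℓ : ℕ) : Set (Fin d → ℝ) :=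
  {v | ∃ g, Net σ p ℓ Unit g ∧ ∀ i, g (x i) () = v i}

variable {σ p x}

lemma feat_combo {ℓ J : ℕ} {u : Fin J → Fin d → ℝ}
    (hu : ∀ j, u j ∈ FeatV σ p x ℓ) (coef : Fin J → ℝ) (b₀ : ℝ) :
    (fun i => (∑ j, coef j * σ (u j i)) - b₀) ∈ FeatV σ p x (ℓ+1) := by
  choose g hg hval using hu
  obtain ⟨κ, iκ, G, e, hG, hGval⟩ := famNet J g hg
  haveI := Classical.decEq κ
  refine ⟨_, Net.layer hG
    (Matrix.of fun (_ : Unit) k => ∑ j, if e j = k then coef j else 0) (fun _ => b₀), ?_⟩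
  intro i
  simp only [Pi.sub_apply, Matrix.mulVec, dotProduct, Matrix.of_apply]
  congr 1
  simp only [Finset.sum_mul, ite_mul, zero_mul]
  rw [Finset.sum_comm]
  refine Finset.sum_congr rfl fun j _ => ?_
  rw [Finset.sum_ite_eq]
  simp [hGval, hval]

lemma feat_linear {ℓ J : ℕ} {u : Fin J → Fin d → ℝ}
    (hu : ∀ j, u j ∈ FeatV σ p x ℓ) (coef : Fin J → ℝ) (b₀ : ℝ) :
    (fun i => (∑ j, coef j * u j i) - b₀) ∈ FeatV σ p x ℓ := by
  choose g hg hval using hu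
  obtain ⟨κ, iκ, G, e, hG, hGval⟩ := famNet J g hg
  haveI := Classical.decEq κ
  refine ⟨_, hG.affineComp
    (Matrix.of fun (_ : Unit) k => ∑ j, if e j = k then coef j else 0) (fun _ => b₀), ?_⟩
  intro i
  simp only [Pi.sub_apply, Matrix.mulVec, dotProduct, Matrix.of_apply]
  congr 1
  simp only [Finset.sum_mul, ite_mul, zero_mul]
  rw [Finset.sum_comm]
  refine Finset.sum_congr rfl fun j _ => ?_
  rw [Finset.sum_ite_eq]
  simp [hGval, hval]

variable (σ p x) in
/-- The achievable value vectors at depth `ℓ` form a submodule. -/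
def featSub (ℓ : ℕ) : Submodule ℝ (Fin d → ℝ) where
  carrier := FeatV σ p x ℓ
  zero_mem' := by
    have h := feat_linear (σ := σ) (p := p) (x := x) (ℓ := ℓ) (J := 0)
      (u := Fin.elim0) (fun j => j.elim0) (fun j => j.elim0) 0
    simp at h; exact h
  add_mem' := by
    intro a b ha hb
    have h := feat_linear (σ := σ) (p := p) (x := x) (ℓ := ℓ) (J := 2)
      (u := ![a, b]) (fun j => by fin_cases j <;> simpa) 1 0
    simp [Fin.sum_univ_two] at h; exact h
  smul_mem' := by
    intro c v hv
    have h := feat_linear (σ := σ) (p := p) (x := x) (ℓ := ℓ) (J := 1)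
      (u := ![v]) (fun j => by fin_cases j <;> simpa) (fun _ => c) 0
    simp [Fin.sum_univ_one] at h; exact h

lemma const_mem_feat (ℓ : ℕ) (c : ℝ) : (fun _ => c) ∈ FeatV σ p x ℓ := by
  have h := feat_linear (σ := σ) (p := p) (x := x) (ℓ := ℓ) (J := 0)
    (u := Fin.elim0) (fun j => j.elim0) (fun j => j.elim0) (-c)
  simpa using h

lemma sigma_mem_feat {ℓ : ℕ} {v : Fin d → ℝ} (hv : v ∈ FeatV σ p x ℓ) :
    (fun i => σ (v i)) ∈ FeatV σ p x (ℓ+1) := by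
  have h := feat_combo (σ := σ) (p := p) (x := x) (ℓ := ℓ) (J := 1)
    (u := ![v]) (fun j => by fin_cases j <;> simpa) 1 0
  simpa [Fin.sum_univ_one] using h

lemma affine_mem_feat (wv : Fin p → ℝ) (b : ℝ) :
    (fun i => (∑ k, wv k * x i k) - b) ∈ FeatV σ p x 0 := by
  refine ⟨_, Net.affine (Matrix.of fun (_ : Unit) k => wv k) (fun _ => b), ?_⟩
  intro i
  simp [Matrix.mulVec, dotProduct]

/-- If all target columns are achievable at depth `ℓ`, there is one net matching the data. -/
lemma feat_final {ℓ : ℕ} {q : ℕ} (z : Fin d → Fin q → ℝ)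
    (hz : ∀ r : Fin q, (fun i => z i r) ∈ FeatV σ p x ℓ) :
    ∃ g, Net σ p ℓ (Fin q) g ∧ ∀ i, g (x i) = z i := by
  choose g hg hval using hz
  obtain ⟨κ, iκ, G, e, hG, hGval⟩ := famNet q g hg
  haveI := Classical.decEq κ
  refine ⟨_, hG.affineComp (Matrix.of fun (r : Fin q) k => if e r = k then 1 else 0) 0, ?_⟩
  intro i
  funext r
  simp only [Pi.sub_apply, Matrix.mulVec, dotProduct, Matrix.of_apply, Pi.zero_apply,
    sub_zero, ite_mul, one_mul, zero_mul]
  rw [Finset.sum_ite_eq]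
  simp [hGval, hval]

end Feat



/-- Shift operator. -/
def sh (s : ℝ) (f : ℝ → ℝ) : ℝ → ℝ := fun x => f (x + s)

/-- Difference operator `Δ_h`. -/
def dl (h : ℝ) (f : ℝ → ℝ) : ℝ → ℝ := fun x => f (x + h) - f x

/-- Iterated mixed differences. -/
def iterDiff : List ℝ → (ℝ → ℝ) → (ℝ → ℝ)
  | [], f => f
  | h :: u, f => iterDiff u (dl h f)

lemma dl_sh (h s : ℝ) (f : ℝ → ℝ) : dl h (sh s f) = sh s (dl h f) := by
  funext y
  simp only [dl, sh]
  rw [add_right_comm]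

lemma iterDiff_sh (u : List ℝ) : ∀ (f : ℝ → ℝ) (s x : ℝ),
    iterDiff u (sh s f) x = iterDiff u f (x + s) := by
  induction u with
  | nil => intro f s x; rfl
  | cons h u ih =>
      intro f s x
      show iterDiff u (dl h (sh s f)) x = _
      rw [dl_sh, ih]
      rfl

lemma iterDiff_const_mul (u : List ℝ) : ∀ (f : ℝ → ℝ) (c x : ℝ),
    iterDiff u (fun y => c * f y) x = c * iterDiff u f x := by
  induction u with
  | nil => intro f c x; rfl
  | cons h u ih =>
      intro f c x
      show iterDiff u (dl h fun y => c * f y) x = _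
      have : dl h (fun y => c * f y) = fun y => c * dl h f y := by
        funext y; simp [dl]; ring
      rw [this, ih]
      rfl

/-- The key elimination lemma: from a two-parameter family of annihilation identities for `σ`,
conclude that suitable iterated differences of `σ` vanish. -/
lemma CN (σ : ℝ → ℝ) : ∀ (n : ℕ) (a : Fin n → ℝ), Function.Injective a →
    ∀ (R : Fin n → (ℝ → ℝ) → (ℝ → ℝ)),
    (∀ i s g, R i (sh s g) = sh s (R i g)) →
    (∀ i (g₁ g₂ : ℝ → ℝ), R i (fun y => g₁ y - g₂ y) = fun y => R i g₁ y - R i g₂ y) →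
    (∀ w x, (∑ i, R i (sh (w * a i) σ) x) = 0) →
    ∀ (i₀ : Fin n) (u : List ℝ), u.length + 1 = n → ∀ x, iterDiff u (R i₀ σ) x = 0 := by
  intro n
  induction n with
  | zero => intro a ha R hsh hsub hyp i₀; exact i₀.elim0
  | succ n ih =>
      intro a ha R hsh hsub hyp i₀ u hu x
      cases n with
      | zero =>
          -- base case: single index
          have hu0 : u = [] := by
            cases u with
            | nil => rfl
            | cons h t => simp at hu
          subst hu0
          have h0 := hyp 0 x
          rw [Fin.sum_univ_one] at h0
          have hsh0 : sh (0 * a 0) σ = σ := by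
            funext y; simp [sh]
          rw [hsh0] at h0
          have : i₀ = 0 := by
            have := i₀.isLt
            ext
            omega
          rw [this]
          exact h0
      | succ m =>
          -- pick an index to eliminate
          have hne01 : (1 : Fin (m + 1 + 1)) ≠ 0 := by
            simp [Fin.ext_iff]
          set e : Fin (m + 1 + 1) := if i₀ = 0 then 1 else 0 with he
          have hei : e ≠ i₀ := by
            by_cases h0 : i₀ = 0
            · rw [he, if_pos h0, h0]; exact hne01
            · rw [he, if_neg h0]; exact fun hc => h0 hc.symm
          -- split the list
          obtain ⟨h, u₂, rfl⟩ : ∃ h u₂, u = h :: u₂ := by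
            cases u with
            | nil => simp at hu
            | cons h t => exact ⟨h, t, rfl⟩
          have hu₂ : u₂.length + 1 = m + 1 := by
            simpa using hu
          have hae : a i₀ - a e ≠ 0 := sub_ne_zero.mpr (fun hc => hei (ha hc).symm)
          set v : ℝ := h / (a i₀ - a e) with hv
          have hva : v * (a i₀ - a e) = h := div_mul_cancel₀ h hae
          -- the reduced system
          set a' : Fin (m + 1) → ℝ := fun k => a (e.succAbove k) with ha'
          have ha'i : Function.Injective a' :=
            fun k₁ k₂ hk => Fin.succAbove_right_injective (ha hk)
          set R' : Fin (m + 1) → (ℝ → ℝ) → (ℝ → ℝ) := fun k g =>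
            R (e.succAbove k) (fun y => g (y + v * a (e.succAbove k)) - g (y + v * a e)) with hR'
          have hsh' : ∀ k s g, R' k (sh s g) = sh s (R' k g) := by
            intro k s g
            have : (fun y => (sh s g) (y + v * a (e.succAbove k)) - (sh s g) (y + v * a e))
                = sh s (fun y => g (y + v * a (e.succAbove k)) - g (y + v * a e)) := by
              funext y
              simp only [sh]
              rw [add_right_comm y (v * a (e.succAbove k)) s, add_right_comm y (v * a e) s]
            rw [hR']
            dsimp only
            rw [this, hsh]
          have hsub' : ∀ k (g₁ g₂ : ℝ → ℝ),
              R' k (fun y => g₁ y - g₂ y) = fun y => R' k g₁ y - R' k g₂ y := by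
            intro k g₁ g₂
            have : (fun y => (fun z => g₁ z - g₂ z) (y + v * a (e.succAbove k))
                  - (fun z => g₁ z - g₂ z) (y + v * a e))
                = fun y => (fun z => g₁ (z + v * a (e.succAbove k)) - g₁ (z + v * a e)) y
                  - (fun z => g₂ (z + v * a (e.succAbove k)) - g₂ (z + v * a e)) y := by
              funext y; ring
            rw [hR']
            dsimp only
            rw [this, hsub]
          have hyp' : ∀ w x', (∑ k, R' k (sh (w * a' k) σ) x') = 0 := by
            intro w x'
            have term_eq : ∀ k : Fin (m + 1),
                R' k (sh (w * a' k) σ) x'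
                  = R (e.succAbove k) (sh ((w + v) * a (e.succAbove k)) σ) x'
                    - R (e.succAbove k) (sh (w * a (e.succAbove k)) σ) (x' + v * a e) := by
              intro k
              set i' := e.succAbove k with hi'
              have inner_eq : (fun y => (sh (w * a' k) σ) (y + v * a i') - (sh (w * a' k) σ) (y + v * a e))
                  = fun y => (sh ((w + v) * a i') σ) y - (sh (v * a e) (sh (w * a i') σ)) y := by
                funext y
                simp only [sh, ha']
                congr 2 <;> ring
              rw [hR']
              dsimp only
              rw [← hi', inner_eq, hsub, hsh i' (v * a e)]
              rfl
            rw [Finset.sum_congr rfl (fun k _ => term_eq k), Finset.sum_sub_distrib]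
            have s1 : (∑ k : Fin (m + 1), R (e.succAbove k) (sh ((w + v) * a (e.succAbove k)) σ) x')
                = - R e (sh ((w + v) * a e) σ) x' := by
              have h := Fin.sum_univ_succAbove (fun i => R i (sh ((w + v) * a i) σ) x') e
              rw [hyp (w + v) x'] at h
              linarith [h]
            have s2 : (∑ k : Fin (m + 1), R (e.succAbove k) (sh (w * a (e.succAbove k)) σ) (x' + v * a e))
                = - R e (sh (w * a e) σ) (x' + v * a e) := by
              have h := Fin.sum_univ_succAbove (fun i => R i (sh (w * a i) σ) (x' + v * a e)) e
              rw [hyp w (x' + v * a e)] at h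
              linarith [h]
            rw [s1, s2]
            have s3 : R e (sh (w * a e) σ) (x' + v * a e) = R e (sh ((w + v) * a e) σ) x' := by
              have : sh (v * a e) (sh (w * a e) σ) = sh ((w + v) * a e) σ := by
                funext y; simp only [sh]; congr 1; ring
              calc R e (sh (w * a e) σ) (x' + v * a e)
                  = sh (v * a e) (R e (sh (w * a e) σ)) x' := rfl
                _ = R e (sh (v * a e) (sh (w * a e) σ)) x' := by
                      rw [hsh e (v * a e) (sh (w * a e) σ)]
                _ = R e (sh ((w + v) * a e) σ) x' := by rw [this]
            rw [s3]
            ring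
          obtain ⟨k₀, hk₀⟩ := Fin.exists_succAbove_eq (Ne.symm hei)
          have hIH := ih a' ha'i R' hsh' hsub' hyp' k₀ u₂ hu₂
          -- identify R' k₀ σ
          have hR'k₀ : R' k₀ σ = sh (v * a e) (R i₀ (dl h σ)) := by
            have inner : (fun y => σ (y + v * a (e.succAbove k₀)) - σ (y + v * a e))
                = sh (v * a e) (dl h σ) := by
              funext y
              simp only [sh, dl, hk₀]
              congr 2
              rw [← hva]; ring
            rw [hR']
            dsimp only
            rw [inner, hsh, hk₀]
          have hvanish : ∀ y, iterDiff u₂ (R i₀ (dl h σ)) y = 0 := by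
            intro y
            have := hIH (y - v * a e)
            rw [hR'k₀, iterDiff_sh] at this
            simpa using this
          -- conclude
          show iterDiff u₂ (dl h (R i₀ σ)) x = 0
          have hcomm : dl h (R i₀ σ) = R i₀ (dl h σ) := by
            have : (fun y => (sh h σ) y - σ y) = dl h σ := by
              funext y; rfl
            funext y
            calc dl h (R i₀ σ) y = R i₀ (sh h σ) y - R i₀ σ y := by rw [hsh]; rfl
              _ = R i₀ (fun z => (sh h σ) z - σ z) y := by rw [hsub]
              _ = R i₀ (dl h σ) y := by rw [this]
          rw [hcomm]
          exact hvanish x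





/-- Interval integrability on all intervals. -/
def II (f : ℝ → ℝ) : Prop := ∀ a b : ℝ, IntervalIntegrable f volume a b

lemma II.translate {f : ℝ → ℝ} (hf : II f) (c : ℝ) : II (fun x => f (x + c)) := by
  intro a b
  have := (hf (a + c) (b + c)).comp_add_right c
  simpa using this

lemma II.sub {f g : ℝ → ℝ} (hf : II f) (hg : II g) : II (fun x => f x - g x) :=
  fun a b => (hf a b).sub (hg a b)

lemma II.dl {f : ℝ → ℝ} (hf : II f) (h : ℝ) : II (DIVO.dl h f) :=
  (hf.translate h).sub hf

lemma II.finsum {n : ℕ} {F : Fin n → ℝ → ℝ} (hF : ∀ i, II (F i)) :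
    II (fun x => ∑ i, F i x) := by
  intro a b
  have : (fun x => ∑ i, F i x) = ∑ i, F i := by
    funext x; simp
  rw [this]
  exact IntervalIntegrable.sum _ (fun i _ => hF i a b)

lemma Continuous.ii {f : ℝ → ℝ} (hf : Continuous f) : II f :=
  fun a b => hf.intervalIntegrable a b

/-- A measurable-in-the-integrable-sense additive function is linear. -/
lemma addlin (α : ℝ → ℝ) (hadd : ∀ a b, α (a + b) = α a + α b) (hii : II α) :
    ∀ h, α h = α 1 * h := by
  -- α is continuous
  have hF : Continuous fun y => ∫ s in (0:ℝ)..y, α s :=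
    intervalIntegral.continuous_primitive hii 0
  have key : ∀ h : ℝ, (∫ s in (0:ℝ)..(h+1), α s) - (∫ s in (0:ℝ)..h, α s)
      = α h + ∫ s in (0:ℝ)..1, α s := by
    intro h
    have h1 : (∫ s in (0:ℝ)..h, α s) + (∫ s in h..(h+1), α s) = ∫ s in (0:ℝ)..(h+1), α s :=
      intervalIntegral.integral_add_adjacent_intervals (hii 0 h) (hii h (h+1))
    have h2 : (∫ s in h..(h+1), α s) = ∫ s in (0:ℝ)..1, α (h + s) := by
      rw [intervalIntegral.integral_comp_add_left (fun s => α s) h]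
      norm_num
    have h3 : (∫ s in (0:ℝ)..1, α (h + s)) = α h + ∫ s in (0:ℝ)..1, α s := by
      have : ∀ s, α (h + s) = α h + α s := fun s => hadd h s
      rw [intervalIntegral.integral_congr (g := fun s => α h + α s) (fun s _ => this s)]
      rw [intervalIntegral.integral_add (intervalIntegrable_const) (hii 0 1)]
      simp
    linarith
  have hcont : Continuous α := by
    have : α = fun h => ((∫ s in (0:ℝ)..(h+1), α s) - (∫ s in (0:ℝ)..h, α s))
        - ∫ s in (0:ℝ)..1, α s := by
      funext h; rw [key h]; ring
    rw [this]
    exact ((hF.comp (continuous_id.add continuous_const)).sub hF).sub continuous_const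
  -- ℚ-linearity
  have h0 : α 0 = 0 := by
    have := hadd 0 0
    simpa using this
  have hnat : ∀ (n : ℕ) (y : ℝ), α (n * y) = n * α y := by
    intro n
    induction n with
    | zero => intro y; simpa using h0
    | succ n ih =>
        intro y
        have : ((n : ℝ) + 1) * y = n * y + y := by ring
        push_cast
        rw [this, hadd, ih]
        ring
  have hint : ∀ (z : ℤ) (y : ℝ), α (z * y) = z * α y := by
    intro z y
    cases z with
    | ofNat n => push_cast; exact hnat n y
    | negSucc n =>
        have hneg : ∀ t, α (-t) = - α t := by
          intro t
          have := hadd t (-t)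
          simp only [add_neg_cancel, h0] at this
          linarith
        have : (Int.negSucc n : ℝ) * y = -(((n+1 : ℕ) : ℝ) * y) := by
          push_cast [Int.negSucc_eq]; ring
        rw [this, hneg, hnat]
        push_cast [Int.negSucc_eq]; ring
  have hrat : ∀ q : ℚ, α q = α 1 * q := by
    intro q
    have hden : ((q.den : ℝ)) ≠ 0 := by
      exact_mod_cast q.den_pos.ne'
    have h2 : ((q.den:ℝ)) * (q:ℝ) = (q.num : ℝ) := by
      rw [Rat.cast_def]; field_simp
    have h3 : α (q.num : ℝ) = (q.num : ℝ) * α 1 := by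
      have := hint q.num 1
      simpa using this
    have hfin : α ↑q = ((q.num:ℝ) * α 1) / q.den := by
      rw [eq_div_iff hden]
      calc α ↑q * q.den = (q.den : ℝ) * α ↑q := by ring
        _ = α ((q.den : ℝ) * ↑q) := (hnat _ _).symm
        _ = α (q.num : ℝ) := by rw [h2]
        _ = (q.num : ℝ) * α 1 := h3
    rw [hfin, Rat.cast_def]
    ring
  -- conclude by density
  have hfun : (fun y => α y - α 1 * y) = fun _ => (0:ℝ) := by
    refine Continuous.ext_on Rat.denseRange_cast ?_ continuous_const ?_
    · exact hcont.sub (continuous_const.mul continuous_id)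
    · rintro y ⟨q, rfl⟩
      simp only
      rw [hrat q]
      ring
  intro h
  have := congrFun hfun h
  linarith

/-- Composition with `X + C t` preserves coefficients at or above the degree. -/
lemma coeff_comp_linear (Q : ℝ[X]) (t : ℝ) {j : ℕ} (hj : Q.natDegree ≤ j) :
    (Q.comp (X + C t)).coeff j = Q.coeff j := by
  rw [comp_eq_sum_left, Polynomial.sum_def, finset_sum_coeff]
  have hterm : ∀ e ∈ Q.support, (C (Q.coeff e) * (X + C t) ^ e).coeff j
      = if e = j then Q.coeff j else 0 := by
    intro e he
    have hle : e ≤ Q.natDegree := Polynomial.le_natDegree_of_mem_supp e he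
    rw [coeff_C_mul, coeff_X_add_C_pow]
    by_cases hej : e = j
    · subst hej
      simp [Nat.choose_self]
    · have helt : e < j := lt_of_le_of_ne (le_trans hle hj) hej
      rw [Nat.choose_eq_zero_of_lt helt]
      simp [hej]
  rw [Finset.sum_congr rfl hterm]
  by_cases hjs : j ∈ Q.support
  · rw [Finset.sum_ite_eq' Q.support j (fun _ => Q.coeff j)]
    simp [hjs]
  · rw [Finset.sum_ite_eq' Q.support j (fun _ => Q.coeff j)]
    simp only [hjs, if_false]
    exact (Polynomial.notMem_support_iff.mp hjs).symm

lemma dl_eval (Q : ℝ[X]) (h : ℝ) :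
    dl h (fun t => Q.eval t) = fun t => (Q.comp (X + C h) - Q).eval t := by
  funext t
  simp [dl, eval_comp]

/-- Polynomials with vanishing high coefficients are killed by enough differences. -/
lemma polyFr : ∀ (K : ℕ) (Q : ℝ[X]), (∀ j, K ≤ j → Q.coeff j = 0) →
    ∀ u : List ℝ, u.length = K → ∀ y, iterDiff u (fun t => Q.eval t) y = 0 := by
  intro K
  induction K with
  | zero =>
      intro Q hQ u hu y
      have : Q = 0 := Polynomial.ext fun n => by simpa using hQ n (Nat.zero_le n)
      subst this
      obtain rfl : u = [] := List.length_eq_zero_iff.mp hu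
      simp [iterDiff]
  | succ K ih =>
      intro Q hQ u hu y
      obtain ⟨h, u', rfl⟩ : ∃ h u', u = h :: u' := by
        cases u with
        | nil => simp at hu
        | cons h t => exact ⟨h, t, rfl⟩
      have hu' : u'.length = K := by simpa using hu
      show iterDiff u' (dl h fun t => Q.eval t) y = 0
      rw [dl_eval]
      refine ih _ ?_ u' hu' y
      intro j hj
      have hdeg : Q.natDegree ≤ K := by
        rw [natDegree_le_iff_coeff_eq_zero]
        intro m hm
        exact hQ m hm
      rw [coeff_sub, coeff_comp_linear Q h (le_trans hdeg hj), sub_self]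

/-- Measurable (interval-integrable) solutions of the Fréchet functional equation
are polynomials. -/
lemma frPoly : ∀ (K : ℕ) (f : ℝ → ℝ), II f →
    (∀ u : List ℝ, u.length = K → ∀ y, iterDiff u f y = 0) →
    ∃ P : ℝ[X], (∀ t, f t = P.eval t) ∧ ∀ j, K ≤ j → P.coeff j = 0 := by
  intro K
  induction K using Nat.strong_induction_on with
  | _ K ihK =>
    match K with
    | 0 =>
        intro f hf hfr
        refine ⟨0, fun t => by simpa [iterDiff] using hfr [] rfl t, by simp⟩
    | 1 =>
        intro f hf hfr
        refine ⟨C (f 0), fun t => ?_, fun j hj => ?_⟩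
        · have := hfr [t] rfl 0
          simp only [iterDiff, dl, zero_add] at this
          simp only [eval_C]
          linarith [this]
        · rw [coeff_C]
          simp [Nat.pos_iff_ne_zero.mp hj]
    | (K+2) =>
        intro f hf hfr
        have hdl : ∀ h : ℝ, ∃ P : ℝ[X], (∀ t, dl h f t = P.eval t) ∧
            ∀ j, K+1 ≤ j → P.coeff j = 0 := by
          intro h
          refine ihK (K+1) (by omega) (dl h f) (hf.dl h) ?_
          intro u hu y
          exact hfr (h :: u) (by simp [hu]) y
        choose P hPval hPcoeff using hdl
        set α : ℝ → ℝ := fun h => (P h).coeff K with hα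
        have hPdegK : ∀ h, (P h).natDegree ≤ K := fun h =>
          natDegree_le_iff_coeff_eq_zero.mpr (fun m hm => hPcoeff h m hm)
        have hadd : ∀ h₁ h₂, α (h₁ + h₂) = α h₁ + α h₂ := by
          intro h₁ h₂
          have hpoly : P (h₁ + h₂) = (P h₁).comp (X + C h₂) + P h₂ := by
            apply Polynomial.funext
            intro r
            rw [eval_add, eval_comp, eval_add, eval_X, eval_C]
            rw [← hPval, ← hPval, ← hPval]
            simp only [dl]
            have e1 : r + (h₁ + h₂) = r + h₂ + h₁ := by ring
            rw [e1]
            ring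
          rw [hα]
          dsimp only
          rw [hpoly, coeff_add, coeff_comp_linear _ _ (hPdegK h₁)]
        -- integrability of α via Lagrange interpolation
        set v : Fin (K+1) → ℝ := fun i => ((i : ℕ) : ℝ) with hv
        have hvinj : Set.InjOn v (Finset.univ : Finset (Fin (K+1))) := by
          intro i _ j _ hij
          have : ((i : ℕ) : ℝ) = ((j : ℕ) : ℝ) := hij
          ext
          exact_mod_cast this
        have hdeg : ∀ h, (P h).degree < ((Finset.univ : Finset (Fin (K+1))).card : ℕ) := by
          intro h
          have : (P h).degree < ((K+1 : ℕ) : WithBot ℕ) :=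
            (degree_lt_iff_coeff_zero _ _).mpr
              (fun m hm => hPcoeff h m (by exact_mod_cast hm))
          simpa using this
        have hPrep : ∀ h, P h = Lagrange.interpolate Finset.univ v (fun i => dl h f (v i)) :=
          fun h => Lagrange.eq_interpolate_of_eval_eq _ hvinj (hdeg h)
            (fun i _ => (hPval h (v i)).symm)
        set L : (Fin (K+1) → ℝ) →ₗ[ℝ] ℝ :=
          (Polynomial.lcoeff ℝ K).comp (Lagrange.interpolate Finset.univ v) with hL
        have hαL : ∀ h, α h = ∑ i, (f (h + v i) - f (v i)) *
            L (fun j => if i = j then 1 else 0) := by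
          intro h
          rw [hα]
          dsimp only
          rw [hPrep h]
          have hrw := LinearMap.pi_apply_eq_sum_univ L (fun i => dl h f (v i))
          have : (Lagrange.interpolate Finset.univ v (fun i => dl h f (v i))).coeff K
              = L (fun i => dl h f (v i)) := rfl
          rw [this, hrw]
          refine Finset.sum_congr rfl fun i _ => ?_
          simp only [dl, smul_eq_mul]
          rw [add_comm (v i) h]
        have hαII : II α := by
          have : α = fun h => ∑ i, ((f (h + v i) - f (v i)) *
              L (fun j => if i = j then 1 else 0)) := by
            funext h; exact hαL h
          rw [this]
          refine II.finsum fun i => ?_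
          intro a b
          exact (((hf.translate (v i)) a b).sub (intervalIntegrable_const)).mul_const _
        have hlin := addlin α hadd hαII
        set γ : ℝ := α 1 with hγ
        have hKne : ((K:ℝ) + 1) ≠ 0 := by positivity
        set g : ℝ → ℝ := fun t => f t - γ / ((K:ℝ)+1) * t^(K+1) with hg
        have hgII : II g := by
          refine hf.sub ?_
          exact Continuous.ii (continuous_const.mul (continuous_pow (K+1)))
        set Qh : ℝ → ℝ[X] := fun h =>
          P h - C (γ/((K:ℝ)+1)) * ((X + C h)^(K+1) - X^(K+1)) with hQh
        have hdlg : ∀ h, dl h g = fun t => (Qh h).eval t := by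
          intro h
          funext t
          simp only [hQh, hg, dl, eval_sub, eval_mul, eval_C, eval_pow, eval_add, eval_X]
          rw [← hPval h t]
          simp only [dl]
          ring
        have hQcoeff : ∀ h j, K ≤ j → (Qh h).coeff j = 0 := by
          intro h j hj
          rw [hQh]
          dsimp only
          rw [coeff_sub, coeff_C_mul, coeff_sub, coeff_X_add_C_pow, coeff_X_pow]
          rcases eq_or_lt_of_le hj with rfl | hjK
          · have h1 : (P h).coeff K = γ * h := by
              have := hlin h
              rw [hα] at this
              simpa [hγ, mul_comm] using this
            have hch : (Nat.choose (K+1) K : ℝ) = (K:ℝ)+1 := by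
              rw [Nat.choose_succ_self_right]
              push_cast; ring
            rw [h1]
            rw [if_neg (by omega : ¬ K = K + 1), hch]
            have he1 : K + 1 - K = 1 := by omega
            rw [he1]
            field_simp
            ring
          · have hj1 : K + 1 ≤ j := hjK
            rw [hPcoeff h j hj1]
            rcases eq_or_lt_of_le hj1 with hje | hjlt
            · rw [← hje]
              simp [Nat.choose_self]
            · rw [Nat.choose_eq_zero_of_lt hjlt]
              simp [if_neg (by omega : ¬ j = K + 1)]
        have hgfr : ∀ u : List ℝ, u.length = K+1 → ∀ y, iterDiff u g y = 0 := by
          intro u hu y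
          obtain ⟨h, u', rfl⟩ : ∃ h u', u = h :: u' := by
            cases u with
            | nil => simp at hu
            | cons h t => exact ⟨h, t, rfl⟩
          have hu' : u'.length = K := by simpa using hu
          show iterDiff u' (dl h g) y = 0
          rw [hdlg h]
          exact polyFr K (Qh h) (hQcoeff h) u' hu' y
        obtain ⟨G, hGval, hGcoeff⟩ := ihK (K+1) (by omega) g hgII hgfr
        refine ⟨G + C (γ/((K:ℝ)+1)) * X^(K+1), fun t => ?_, fun j hj => ?_⟩
        · rw [eval_add, eval_mul, eval_C, eval_pow, eval_X, ← hGval t]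
          rw [hg]
          ring
        · rw [coeff_add, coeff_C_mul, coeff_X_pow, hGcoeff j (by omega)]
          simp [if_neg (by omega : ¬ j = K + 1)]




/-- Extract the "coefficients" of a polynomial curve lying in a submodule. -/
lemma vdm_extract {M : Type*} [AddCommGroup M] [Module ℝ M] (N : Submodule ℝ M)
    {n : ℕ} (v : Fin n → M)
    (h : ∀ s : ℝ, (∑ k : Fin n, s ^ (k:ℕ) • v k) ∈ N) : ∀ k, v k ∈ N := by
  intro k
  set A : Matrix (Fin n) (Fin n) ℝ := Matrix.vandermonde (fun j => ((j:ℕ):ℝ)) with hA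
  have hdet : IsUnit A.det := by
    rw [hA, Matrix.det_vandermonde]
    refine (Finset.prod_ne_zero_iff.mpr fun i _ => Finset.prod_ne_zero_iff.mpr fun j hj => ?_).isUnit
    have hij : i < j := Finset.mem_Ioi.mp hj
    have : ((i:ℕ):ℝ) < ((j:ℕ):ℝ) := by exact_mod_cast hij
    exact sub_ne_zero.mpr (ne_of_gt this)
  have hinv : A⁻¹ * A = 1 := Matrix.nonsing_inv_mul A hdet
  have hrow : ∀ j : Fin n, (∑ k', A j k' • v k') ∈ N := by
    intro j
    have := h ((j:ℕ):ℝ)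
    simpa [hA, Matrix.vandermonde] using this
  have hvk : v k = ∑ j, A⁻¹ k j • (∑ k', A j k' • v k') := by
    rw [Finset.sum_congr rfl (fun j _ => Finset.smul_sum)]
    rw [Finset.sum_comm]
    have : ∀ k' : Fin n, (∑ j, A⁻¹ k j • A j k' • v k') = ((A⁻¹ * A) k k') • v k' := by
      intro k'
      rw [Matrix.mul_apply, Finset.sum_smul]
      exact Finset.sum_congr rfl fun j _ => (smul_smul _ _ _)
    rw [Finset.sum_congr rfl (fun k' _ => this k')]
    rw [hinv]
    simp [Matrix.one_apply]
  rw [hvk]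
  exact Submodule.sum_mem _ fun j _ => Submodule.smul_mem _ _ (hrow j)

/-- The span of compositions `P ∘ R` over inner polynomials of degree at most `D`. -/
noncomputable def NSpan (P : ℝ[X]) (D : ℕ) : Submodule ℝ ℝ[X] :=
  Submodule.span ℝ {f | ∃ R : ℝ[X], R.natDegree ≤ D ∧ f = P.comp R}

lemma curve_mem {P : ℝ[X]} {D : ℕ} {R S : ℝ[X]} (hR : R.natDegree ≤ D)
    (hS : S.natDegree ≤ D) (s : ℝ) : P.comp (R + C s * S) ∈ NSpan P D := by
  refine Submodule.subset_span ⟨R + C s * S, ?_, rfl⟩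
  refine le_trans (natDegree_add_le _ _) (max_le hR (le_trans (natDegree_C_mul_le _ _) hS))

/-- The polynomial curve `s ↦ P.comp (R + s • S)` expanded in powers of `s`. -/
lemma comp_curve (P R S : ℝ[X]) (s : ℝ) :
    P.comp (R + C s * S) = ∑ k ∈ Finset.range (P.natDegree + 1),
      s ^ k • (((P.map (C : ℝ →+* ℝ[X])).comp (C R + C S * X)).coeff k) := by
  set G : (ℝ[X])[X] := (P.map (C : ℝ →+* ℝ[X])).comp (C R + C S * X) with hG
  have hdegG : G.natDegree < P.natDegree + 1 := by
    have h1 : (P.map (C : ℝ →+* ℝ[X])).natDegree = P.natDegree :=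
      natDegree_map_eq_of_injective C_injective P
    have h2 : (C R + C S * X : (ℝ[X])[X]).natDegree ≤ 1 := by
      refine le_trans (natDegree_add_le _ _) (max_le ?_ ?_)
      · simp
      · exact le_trans (natDegree_C_mul_le _ _) (by simp)
    calc G.natDegree ≤ (P.map (C : ℝ →+* ℝ[X])).natDegree * (C R + C S * X).natDegree :=
          natDegree_comp_le
      _ ≤ P.natDegree * 1 := by rw [h1]; exact Nat.mul_le_mul_left _ h2
      _ < P.natDegree + 1 := by omega
  have heval : G.eval (C s) = P.comp (R + C s * S) := by
    rw [hG, eval_comp, eval_add, eval_C, eval_mul, eval_C, eval_X, eval_map]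
    show eval₂ C (R + S * C s) P = _
    rw [← Polynomial.comp]
    congr 1
    ring
  have hsum : G.eval (C s) = ∑ k ∈ Finset.range (P.natDegree + 1), s ^ k • G.coeff k := by
    rw [eval_eq_sum_range' hdegG]
    refine Finset.sum_congr rfl fun k _ => ?_
    rw [smul_eq_C_mul, ← C_pow]
    exact mul_comm _ _
  rw [← heval, hsum]

/-- Top coefficient of the curve expansion. -/
lemma comp_curve_top (P R S : ℝ[X]) (hS : S ≠ 0) (hP : P.natDegree ≠ 0) :
    ((P.map (C : ℝ →+* ℝ[X])).comp (C R + C S * X)).coeff P.natDegree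
      = P.leadingCoeff • S ^ P.natDegree := by
  have h1 : (P.map (C : ℝ →+* ℝ[X])).natDegree = P.natDegree :=
    natDegree_map_eq_of_injective C_injective P
  have hq : (C R + C S * X : (ℝ[X])[X]) = C S * X + C R := by ring
  have h2 : (C S * X + C R : (ℝ[X])[X]).natDegree = 1 := natDegree_linear hS
  have h3 : (C S * X + C R : (ℝ[X])[X]).leadingCoeff = S := leadingCoeff_linear hS
  have h4 := coeff_comp_degree_mul_degree (p := P.map (C : ℝ →+* ℝ[X]))
    (q := C S * X + C R) (by rw [h2]; omega)
  rw [hq]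
  rw [h1, h2, mul_one] at h4
  rw [h4, h3]
  have h5 : (P.map (C : ℝ →+* ℝ[X])).leadingCoeff = C P.leadingCoeff := by
    rw [Polynomial.leadingCoeff, h1, coeff_map]
    rfl
  rw [h5, smul_eq_C_mul]

/-- `S ^ m` lies in the span of compositions. -/
lemma powS_mem {P : ℝ[X]} (hP2 : 2 ≤ P.natDegree) {D : ℕ} {S : ℝ[X]}
    (hS : S.natDegree ≤ D) : S ^ P.natDegree ∈ NSpan P D := by
  by_cases hS0 : S = 0
  · subst hS0
    rw [zero_pow (by omega : P.natDegree ≠ 0)]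
    exact Submodule.zero_mem _
  have hcurve : ∀ s : ℝ, (∑ k : Fin (P.natDegree + 1),
      s ^ (k:ℕ) • (((P.map (C : ℝ →+* ℝ[X])).comp (C 0 + C S * X)).coeff (k:ℕ))) ∈ NSpan P D := by
    intro s
    have := comp_curve P 0 S s
    rw [Fin.sum_univ_eq_sum_range
      (fun k => s ^ k • (((P.map (C : ℝ →+* ℝ[X])).comp (C 0 + C S * X)).coeff k))]
    rw [← this]
    exact curve_mem (by simp) hS s
  have := vdm_extract (NSpan P D) _ hcurve (Fin.last P.natDegree)
  rw [Fin.val_last, comp_curve_top P 0 S hS0 (by omega)] at this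
  have hlc : P.leadingCoeff ≠ 0 := by
    intro hc
    rw [leadingCoeff_eq_zero] at hc
    rw [hc] at hP2
    simp at hP2
  have := Submodule.smul_mem (NSpan P D) (P.leadingCoeff)⁻¹ this
  rwa [smul_smul, inv_mul_cancel₀ hlc, one_smul] at this

/-- Binomial expansion of the power curve. -/
lemma pow_curve (S T W : ℝ[X]) (n : ℕ) (s : ℝ) :
    (S + C s * T)^n * W = ∑ i ∈ Finset.range (n+1),
      s^i • ((n.choose i : ℝ[X]) * (T^i * S^(n-i) * W)) := by
  rw [add_comm S (C s * T), add_pow, Finset.sum_mul]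
  refine Finset.sum_congr rfl fun i _ => ?_
  rw [mul_pow, ← C_pow, smul_eq_C_mul]
  ring

/-- Products of `natDegree P` polynomials of degree at most `D` lie in the span. -/
lemma polyA {P : ℝ[X]} (hP2 : 2 ≤ P.natDegree) {D : ℕ} :
    ∀ (j : ℕ), j ≤ P.natDegree → ∀ (S : ℝ[X]), S.natDegree ≤ D →
    ∀ (l : List ℝ[X]), l.length = j → (∀ T ∈ l, T.natDegree ≤ D) →
    S ^ (P.natDegree - j) * l.prod ∈ NSpan P D := by
  intro j
  induction j with
  | zero =>
      intro _ S hS l hl _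
      obtain rfl : l = [] := List.length_eq_zero_iff.mp hl
      simpa using powS_mem hP2 hS
  | succ j ih =>
      intro hj S hS l hl hlmem
      obtain ⟨T, l', rfl⟩ : ∃ T l', l = T :: l' := by
        cases l with
        | nil => simp at hl
        | cons T l' => exact ⟨T, l', rfl⟩
      have hT : T.natDegree ≤ D := hlmem T (by simp)
      have hl' : l'.length = j := by simpa using hl
      have hl'mem : ∀ U ∈ l', U.natDegree ≤ D := fun U hU => hlmem U (by simp [hU])
      have hcurve : ∀ s : ℝ, (∑ i : Fin (P.natDegree - j + 1),
          s ^ (i:ℕ) • (((P.natDegree - j).choose (i:ℕ) : ℝ[X])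
            * (T^(i:ℕ) * S^(P.natDegree - j - (i:ℕ)) * l'.prod))) ∈ NSpan P D := by
        intro s
        rw [Fin.sum_univ_eq_sum_range (fun i => s ^ i • (((P.natDegree - j).choose i : ℝ[X])
            * (T^i * S^(P.natDegree - j - i) * l'.prod)))]
        rw [← pow_curve]
        have hSsT : (S + C s * T).natDegree ≤ D :=
          le_trans (natDegree_add_le _ _)
            (max_le hS (le_trans (natDegree_C_mul_le _ _) hT))
        exact ih (by omega) (S + C s * T) hSsT l' hl' hl'mem
      have hext := vdm_extract (NSpan P D) _ hcurve ⟨1, by omega⟩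
      simp only at hext
      have hch : (((P.natDegree - j).choose 1 : ℕ) : ℝ[X]) = C ((P.natDegree - j : ℕ) : ℝ) := by
        rw [Nat.choose_one_right]
        simp
      rw [hch] at hext
      have hne : (((P.natDegree - j : ℕ) : ℝ)) ≠ 0 := by
        have : 0 < P.natDegree - j := by omega
        positivity
      have := Submodule.smul_mem (NSpan P D) (((P.natDegree - j : ℕ) : ℝ))⁻¹ hext
      rw [C_mul', smul_smul, inv_mul_cancel₀ hne, one_smul] at this
      have heq : T ^ 1 * S ^ (P.natDegree - j - 1) * l'.prod
          = S ^ (P.natDegree - (j+1)) * (T :: l').prod := by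
        rw [List.prod_cons, pow_one]
        have : P.natDegree - j - 1 = P.natDegree - (j + 1) := by omega
        rw [this]
        ring
      rwa [heq] at this

/-- Decompose an exponent into `m` parts each at most `D`. -/
lemma exp_decomp : ∀ (m c D : ℕ), c ≤ m * D →
    ∃ l : List ℕ, l.length = m ∧ (∀ e ∈ l, e ≤ D) ∧ l.sum = c := by
  intro m
  induction m with
  | zero => intro c D hc; exact ⟨[], rfl, by simp, by simpa using (by omega : c = 0).symm⟩
  | succ m ih =>
      intro c D hc
      obtain ⟨l, hlen, hmem, hsum⟩ := ih (c - min c D) D (by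
        rcases le_total c D with h | h
        · simp [min_eq_left h]
        · rw [min_eq_right h]
          have hmul : (m+1)*D = m*D + D := by ring
          omega)
      refine ⟨min c D :: l, by simp [hlen], ?_, ?_⟩
      · intro e he
        rcases List.mem_cons.mp he with rfl | he'
        · exact min_le_right _ _
        · exact hmem e he'
      · simp only [List.sum_cons, hsum]
        omega

/-- All polynomials of degree at most `natDegree P * D` lie in the span of compositions. -/
lemma nspan_full {P : ℝ[X]} (hP2 : 2 ≤ P.natDegree) {D : ℕ} {Q : ℝ[X]}
    (hQ : Q.natDegree ≤ P.natDegree * D) : Q ∈ NSpan P D := by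
  have hmono : ∀ c : ℕ, c ≤ P.natDegree * D → (X : ℝ[X]) ^ c ∈ NSpan P D := by
    intro c hc
    obtain ⟨l, hlen, hmem, hsum⟩ := exp_decomp P.natDegree c D hc
    have hprod : ((l.map fun e => (X : ℝ[X]) ^ e)).prod = X ^ c := by
      rw [← hsum]
      clear hsum hmem hlen hc
      induction l with
      | nil => simp
      | cons e l ihl => simp [pow_add, ihl]
    have := polyA hP2 (D := D) P.natDegree le_rfl 0
      (by simp : (0:ℝ[X]).natDegree ≤ D)
      (l.map fun e => (X : ℝ[X]) ^ e) (by simp [hlen]) ?_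
    · rw [Nat.sub_self, pow_zero, one_mul, hprod] at this
      exact this
    · intro T hT
      obtain ⟨e, he, rfl⟩ := List.mem_map.mp hT
      simpa using hmem e he
  have hQrep : Q = ∑ i ∈ Finset.range (Q.natDegree + 1), C (Q.coeff i) * X ^ i := by
    conv_lhs => rw [Q.as_sum_range]
    exact Finset.sum_congr rfl fun i _ => (C_mul_X_pow_eq_monomial).symm
  rw [hQrep]
  refine Submodule.sum_mem _ fun i hi => ?_
  rw [C_mul']
  refine Submodule.smul_mem _ _ (hmono i ?_)
  have : i ≤ Q.natDegree := by
    have := Finset.mem_range.mp hi; omega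
  omega




/-- Distinct points are separated by some linear functional. -/
lemma sep {d p : ℕ} (x : Fin d → Fin p → ℝ) (hx : Function.Injective x) :
    ∃ a : Fin p → ℝ, Function.Injective fun i => ∑ k, a k * x i k := by
  classical
  set poly : Fin d → Fin d → ℝ[X] :=
    fun i j => ∑ k : Fin p, C (x i k - x j k) * X ^ (k:ℕ) with hpoly
  have hcoeff : ∀ i j (k₀ : Fin p), (poly i j).coeff (k₀:ℕ) = x i k₀ - x j k₀ := by
    intro i j k₀
    rw [hpoly]
    simp only [finset_sum_coeff, coeff_C_mul, coeff_X_pow]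
    rw [Finset.sum_eq_single k₀]
    · simp
    · intro k _ hk
      rw [if_neg (fun hc => hk (Fin.ext hc).symm), mul_zero]
    · intro hk; exact absurd (Finset.mem_univ k₀) hk
  have hne : ∀ i j, i ≠ j → poly i j ≠ 0 := by
    intro i j hij hc
    obtain ⟨k₀, hk₀⟩ : ∃ k₀, x i k₀ ≠ x j k₀ := by
      by_contra hall
      push_neg at hall
      exact hij (hx (funext hall))
    have := hcoeff i j k₀
    rw [hc] at this
    simp at this
    exact hk₀ (by linarith)
  set B : Set ℝ := ⋃ i, ⋃ j, if _ : i = j then ∅ else {r | (poly i j).IsRoot r} with hB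
  have hBfin : B.Finite := by
    refine Set.finite_iUnion fun i => Set.finite_iUnion fun j => ?_
    by_cases h : i = j
    · simp [h]
    · simpa [h] using finite_setOf_isRoot (hne i j h)
  obtain ⟨r, hr⟩ := hBfin.infinite_compl.nonempty
  refine ⟨fun k => r ^ (k:ℕ), ?_⟩
  intro i j hij
  by_contra hijne
  have hroot : (poly i j).IsRoot r := by
    simp only [IsRoot, hpoly, eval_finset_sum, eval_mul, eval_C, eval_pow, eval_X]
    have : (∑ k : Fin p, r ^ (k:ℕ) * x i k) = ∑ k : Fin p, r ^ (k:ℕ) * x j k := hij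
    have h2 : ∀ k : Fin p, (x i k - x j k) * r ^ (k:ℕ)
        = r ^ (k:ℕ) * x i k - r ^ (k:ℕ) * x j k := fun k => by ring
    rw [Finset.sum_congr rfl (fun k _ => h2 k), Finset.sum_sub_distrib, this, sub_self]
  apply hr
  rw [hB]
  refine Set.mem_iUnion.mpr ⟨i, Set.mem_iUnion.mpr ⟨j, ?_⟩⟩
  rw [dif_neg hijne]
  exact hroot

/-- A proper submodule of `ℝ^d` is annihilated by a nonzero vector. -/
lemma exists_ann {d : ℕ} {W : Submodule ℝ (Fin d → ℝ)} (hW : W ≠ ⊤) :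
    ∃ c : Fin d → ℝ, c ≠ 0 ∧ ∀ v ∈ W, ∑ i, c i * v i = 0 := by
  classical
  obtain ⟨v₀, hv₀⟩ : ∃ v₀, v₀ ∉ W := by
    by_contra hall
    push_neg at hall
    exact hW (Submodule.eq_top_iff'.mpr hall)
  have hnz : W.mkQ v₀ ≠ 0 := by
    intro hc
    exact hv₀ ((Submodule.Quotient.mk_eq_zero W).mp hc)
  haveI : Nontrivial ((Fin d → ℝ) ⧸ W) := ⟨_, _, hnz⟩
  set B := Module.Basis.ofVectorSpace ℝ ((Fin d → ℝ) ⧸ W) with hBdef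
  obtain ⟨i₀⟩ := B.index_nonempty
  set φ : (Fin d → ℝ) →ₗ[ℝ] ℝ := (B.coord i₀).comp W.mkQ with hφ
  have hφW : ∀ v ∈ W, φ v = 0 := by
    intro v hv
    rw [hφ]
    simp [(Submodule.Quotient.mk_eq_zero W).mpr hv]
  have hφne : ∃ u, φ u ≠ 0 := by
    obtain ⟨u, hu⟩ := W.mkQ_surjective (B i₀)
    refine ⟨u, ?_⟩
    rw [hφ]
    simp only [LinearMap.comp_apply, hu]
    rw [Module.Basis.coord_apply, Module.Basis.repr_self]
    simp
  refine ⟨fun i => φ (fun j => if i = j then 1 else 0), ?_, ?_⟩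
  · intro hc
    obtain ⟨u, hu⟩ := hφne
    apply hu
    rw [LinearMap.pi_apply_eq_sum_univ φ u]
    have : ∀ i : Fin d, (fun i => φ (fun j => if i = j then 1 else 0)) i = 0 :=
      fun i => congrFun hc i
    simp only [this] at *
    simp [this]
  · intro v hv
    have h := LinearMap.pi_apply_eq_sum_univ φ v
    rw [hφW v hv] at h
    have h2 : (∑ i : Fin d, (fun i => φ fun j => if i = j then 1 else 0) i * v i)
        = ∑ i : Fin d, v i • φ fun j => if i = j then 1 else 0 := by
      refine Finset.sum_congr rfl fun i _ => ?_
      simp [smul_eq_mul, mul_comm]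
    rw [h2, ← h]


end DIVO

/-- **Vector-valued interpolation by deep networks.**
If `σ` is locally integrable and not a.e. equal to an affine function, then any data set
`(xᵢ, zᵢ)` with `xᵢ ∈ ℝ^p` pairwise distinct and `zᵢ ∈ ℝ^q` can be interpolated by a
feedforward neural network `g : ℝ^p → ℝ^q` with activation `σ`. -/
theorem deep_interpolation_vector_output (d p q : ℕ) (σ : ℝ → ℝ)
    (hσ : LocallyIntegrable σ)
    (haff : ¬ ∃ a b : ℝ, ∀ᵐ t : ℝ, σ t = a * t + b)
    (x : Fin d → Fin p → ℝ) (hx : Function.Injective x) (z : Fin d → Fin q → ℝ) :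
    ∃ g : (Fin p → ℝ) → (Fin q → ℝ), DeepNet σ p q g ∧ ∀ i, g (x i) = z i := by
  classical
  obtain ⟨a, ha⟩ := DIVO.sep x hx
  set t : Fin d → ℝ := fun i => ∑ k, a k * x i k with ht
  have main : ∃ ℓ, DIVO.featSub σ p x ℓ = ⊤ := by
    by_contra hcon
    push_neg at hcon
    obtain ⟨c, hc0, hcann⟩ := DIVO.exists_ann (hcon 1)
    -- the annihilation identity for σ
    have hid : ∀ w y : ℝ, (∑ i, c i * σ (y + w * t i)) = 0 := by
      intro w y
      have hv : (fun i => (∑ k, (w * a k) * x i k) - (-y)) ∈ DIVO.FeatV σ p x 0 :=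
        DIVO.affine_mem_feat (fun k => w * a k) (-y)
      have hv' : (fun i => y + w * t i) ∈ DIVO.FeatV σ p x 0 := by
        have e : (fun i => (∑ k, (w * a k) * x i k) - (-y)) = fun i => y + w * t i := by
          funext i
          rw [ht]
          simp only
          rw [Finset.mul_sum]
          have : ∀ k, w * a k * x i k = w * (a k * x i k) := fun k => by ring
          rw [Finset.sum_congr rfl fun k _ => this k]
          ring
        rwa [e] at hv
      have hσv : (fun i => σ (y + w * t i)) ∈ DIVO.FeatV σ p x 1 := DIVO.sigma_mem_feat hv'
      have hmem : (fun i => σ (y + w * t i)) ∈ DIVO.featSub σ p x 1 := hσv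
      exact hcann _ hmem
    -- apply the elimination lemma
    obtain ⟨i₀, hi₀⟩ := Function.ne_iff.mp hc0
    have hd : 0 < d := i₀.pos
    have hCN := DIVO.CN σ d t ha (fun i g => fun y => c i * g y)
      (fun i s g => rfl)
      (fun i g₁ g₂ => by funext y; ring)
      (fun w y => hid w y) i₀
    have hfr : ∀ u : List ℝ, u.length = d - 1 → ∀ y, DIVO.iterDiff u σ y = 0 := by
      intro u hu y
      have hlen : u.length + 1 = d := by omega
      have h1 : DIVO.iterDiff u (fun y => c i₀ * σ y) y = 0 := hCN u hlen y
      rw [DIVO.iterDiff_const_mul] at h1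
      exact (mul_eq_zero.mp h1).resolve_left hi₀
    have hII : DIVO.II σ :=
      fun a b => (hσ.integrableOn_isCompact isCompact_uIcc).intervalIntegrable
    obtain ⟨P, hPval, hPcoeff⟩ := DIVO.frPoly (d-1) σ hII hfr
    by_cases hdeg : P.natDegree ≤ 1
    · exact haff ⟨P.coeff 1, P.coeff 0, MeasureTheory.ae_of_all _ fun s => by
        rw [hPval s]
        conv_lhs => rw [Polynomial.eq_X_add_C_of_natDegree_le_one hdeg]
        simp⟩
    · push_neg at hdeg
      have hdeg2 : 2 ≤ P.natDegree := hdeg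
      set m := P.natDegree with hm
      -- evaluation linear map
      set E : Polynomial ℝ →ₗ[ℝ] (Fin d → ℝ) :=
        { toFun := fun Q => fun i => Q.eval (t i),
          map_add' := fun p q => funext fun i => by simp,
          map_smul' := fun cs q => funext fun i => by
            simp [Polynomial.smul_eq_C_mul] } with hE
      have hPC : ∀ k : ℕ, ∀ Q : Polynomial ℝ, Q.natDegree ≤ m ^ k →
          (fun i => Q.eval (t i)) ∈ DIVO.FeatV σ p x k := by
        intro k
        induction k with
        | zero =>
            intro Q hQ
            rw [pow_zero] at hQ
            have hval : (fun i => (∑ k, (Q.coeff 1 * a k) * x i k) - (- Q.coeff 0))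
                ∈ DIVO.FeatV σ p x 0 := DIVO.affine_mem_feat _ _
            have e : (fun i => (∑ k, (Q.coeff 1 * a k) * x i k) - (- Q.coeff 0))
                = fun i => Q.eval (t i) := by
              funext i
              conv_rhs => rw [Polynomial.eq_X_add_C_of_natDegree_le_one hQ]
              simp only [Polynomial.eval_add, Polynomial.eval_mul, Polynomial.eval_C,
                Polynomial.eval_X]
              rw [ht]
              simp only
              rw [Finset.mul_sum]
              have : ∀ k, Q.coeff 1 * a k * x i k = Q.coeff 1 * (a k * x i k) :=
                fun k => by ring
              rw [Finset.sum_congr rfl fun k _ => this k]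
              ring
            rwa [e] at hval
        | succ k ih =>
            intro Q hQ
            have hQ' : Q.natDegree ≤ m * m ^ k := by
              rw [pow_succ] at hQ
              rwa [mul_comm]
            have hQN : Q ∈ DIVO.NSpan P (m ^ k) := DIVO.nspan_full hdeg2 hQ'
            have hmap : E Q ∈ Submodule.map E (DIVO.NSpan P (m ^ k)) := ⟨Q, hQN, rfl⟩
            rw [DIVO.NSpan, Submodule.map_span] at hmap
            have hle : Submodule.span ℝ
                (E '' {f | ∃ R : Polynomial ℝ, R.natDegree ≤ m ^ k ∧ f = P.comp R})
                ≤ DIVO.featSub σ p x (k+1) := by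
              rw [Submodule.span_le]
              rintro _ ⟨f, ⟨R, hR, rfl⟩, rfl⟩
              have hER : (fun i => R.eval (t i)) ∈ DIVO.FeatV σ p x k := ih R hR
              have e : E (P.comp R) = fun i => σ ((fun i => R.eval (t i)) i) := by
                funext i
                rw [hE]
                simp only [LinearMap.coe_mk, AddHom.coe_mk]
                rw [Polynomial.eval_comp, ← hPval]
              rw [e]
              exact DIVO.sigma_mem_feat hER
            exact hle hmap
      -- conclude that some level is everything, contradiction
      obtain ⟨k, hk⟩ : ∃ k : ℕ, d - 1 ≤ m ^ k := by
        refine ⟨d, ?_⟩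
        have h1 : d < 2 ^ d := Nat.lt_two_pow_self
        have h2 : 2 ^ d ≤ m ^ d := Nat.pow_le_pow_left hdeg2 d
        omega
      apply hcon k
      rw [eq_top_iff]
      intro zz _
      set Bm : Matrix (Fin d) (Fin d) ℝ := Matrix.vandermonde t with hBm
      have hdet : IsUnit Bm.det := by
        rw [hBm, Matrix.det_vandermonde]
        refine (Finset.prod_ne_zero_iff.mpr fun i _ =>
          Finset.prod_ne_zero_iff.mpr fun j hj => ?_).isUnit
        have hij : i < j := Finset.mem_Ioi.mp hj
        exact sub_ne_zero.mpr fun hc => (Fin.ne_of_lt hij) (ha hc).symm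
      have hrep : zz = ∑ j : Fin d, (Bm⁻¹.mulVec zz j) • (fun i => (t i) ^ (j:ℕ)) := by
        funext i
        have h1 : Bm.mulVec (Bm⁻¹.mulVec zz) = zz := by
          rw [Matrix.mulVec_mulVec, Matrix.mul_nonsing_inv _ hdet, Matrix.one_mulVec]
        calc zz i = (Bm.mulVec (Bm⁻¹.mulVec zz)) i := by rw [h1]
          _ = ∑ j, Bm i j * (Bm⁻¹.mulVec zz) j := rfl
          _ = (∑ j : Fin d, (Bm⁻¹.mulVec zz j) • (fun i => (t i) ^ (j:ℕ))) i := by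
              rw [Finset.sum_apply]
              refine Finset.sum_congr rfl fun j _ => ?_
              simp [hBm, Matrix.vandermonde, mul_comm]
      rw [hrep]
      refine Submodule.sum_mem _ fun j _ => Submodule.smul_mem _ _ ?_
      have hmono := hPC k (Polynomial.X ^ (j:ℕ))
        (by rw [Polynomial.natDegree_X_pow]
            have := j.isLt
            omega)
      have e : (fun i => (Polynomial.X ^ (j:ℕ)).eval (t i)) = fun i => (t i) ^ (j:ℕ) := by
        funext i; simp
      rw [e] at hmono
      exact hmono
  obtain ⟨ℓ, hℓ⟩ := main
  have hz : ∀ r : Fin q, (fun i => z i r) ∈ DIVO.FeatV σ p x ℓ := by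
    intro r
    have : (fun i => z i r) ∈ DIVO.featSub σ p x ℓ := by
      rw [hℓ]; trivial
    exact this
  obtain ⟨g, hg, hgval⟩ := DIVO.feat_final z hz
  exact ⟨g, DIVO.net_toDeep hg, hgval⟩
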